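/- arXiv:0907.2060 — 6 statements merged into one kernel-verified Lean document; each statement's English description precedes it below -/
import Mathlib

section
/- Let k be a field of characteristic 2, let p, r, t1, t2 be polynomials in k[x], and let v in k[x] be irreducible with v not dividing r. If v^2 divides p + r*t1 + t1^2 and v^2 divides p + r*t2 + t2^2, then v^2 divides t1 + t2 or v^2 divides r + t1 + t2. -/
open Polynomial

theorem stmt_1 (k : Type*) [Field k] [CharP k 2]
    (p r t1 t2 v : k[X]) (hv : Irreducible v) (hvr : ¬ v ∣ r)
    (h1 : v ^ 2 ∣ p + r * t1 + t1 ^ 2)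
    (h2 : v ^ 2 ∣ p + r * t2 + t2 ^ 2) :
    v ^ 2 ∣ t1 + t2 ∨ v ^ 2 ∣ r + t1 + t2 := by
  haveI : CharP k[X] 2 := inferInstance
  have htwo : (2 : k[X]) = 0 := by
    exact_mod_cast CharP.cast_eq_zero k[X] 2
  have hprod : v ^ 2 ∣ (t1 + t2) * (r + t1 + t2) := by
    have hsum := dvd_add h1 h2
    have heq : (p + r * t1 + t1 ^ 2) + (p + r * t2 + t2 ^ 2)
        = (t1 + t2) * (r + t1 + t2) := by
      linear_combination (p - t1 * t2) * htwo
    rwa [heq] at hsum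
  have hvp := hv.prime
  by_cases hd : v ∣ t1 + t2
  · have hnd : ¬ v ∣ r + t1 + t2 := by
      intro h
      apply hvr
      have : v ∣ (r + t1 + t2) - (t1 + t2) := dvd_sub h hd
      simpa using this
    exact Or.inl (hvp.pow_dvd_of_dvd_mul_right 2 hnd hprod)
  · exact Or.inr (hvp.pow_dvd_of_dvd_mul_left 2 hd hprod)
end

section
/- Let q be a power of 2 and k the finite field with q elements, let g >= 2 be an integer, let p, r in k[x], and let v in k[x] be irreducible of degree m with 1 <= m <= g + 2 and v not dividing r. Then the number of polynomials t in k[x] of degree at most g+1 such that v divides p + r*t + t^2 is at most 2*q^(g+2-m). -/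
open Polynomial

theorem stmt_2 (k : Type*) [Field k] [Fintype k] (q n : ℕ) (hn : 1 ≤ n)
    (hq : q = 2 ^ n) (hcard : Fintype.card k = q)
    (g : ℕ) (hg : 2 ≤ g)
    (p r v : k[X]) (hv : Irreducible v)
    (m : ℕ) (hm : v.natDegree = m) (hm1 : 1 ≤ m) (hm2 : m ≤ g + 2)
    (hvr : ¬ v ∣ r) :
    Set.ncard {t : k[X] | t.degree ≤ (g + 1 : ℕ) ∧ v ∣ p + r * t + t ^ 2}
      ≤ 2 * q ^ (g + 2 - m) := by
  classical
  have hv0 : v ≠ 0 := hv.ne_zero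
  set N : ℕ := g + 2 - m with hN
  -- monic associate of v
  set u : k[X] := v * C v.leadingCoeff⁻¹ with hu
  have hum : u.Monic := monic_mul_leadingCoeff_inv hv0
  have hassoc : Associated v u :=
    associated_mul_unit_right v _
      (isUnit_C.mpr (isUnit_iff_ne_zero.mpr (inv_ne_zero (leadingCoeff_ne_zero.mpr hv0))))
  have hudeg : u.degree = v.degree := degree_mul_leadingCoeff_inv v hv0
  have hund : u.natDegree = m := by
    rw [natDegree_eq_of_degree_eq hudeg, hm]
  -- the quotient field
  haveI hmax : (Ideal.span {v}).IsMaximal := PrincipalIdealRing.isMaximal_of_irreducible hv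
  let F := k[X] ⧸ Ideal.span {v}
  let φ : k[X] →+* F := Ideal.Quotient.mk (Ideal.span {v})
  have hφ : ∀ a : k[X], φ a = 0 ↔ v ∣ a := fun a => by
    rw [Ideal.Quotient.eq_zero_iff_mem, Ideal.mem_span_singleton]
  -- the quadratic over F
  set Q : F[X] := X ^ 2 + (C (φ r) * X + C (φ p)) with hQ
  have hQm : Q.Monic := monic_X_pow_add degree_linear_lt
  have hQdeg : Q.natDegree = 2 := by
    have hd : Q.degree = 2 := by
      rw [hQ, degree_add_eq_left_of_degree_lt (by rw [degree_X_pow]; exact degree_linear_lt),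
        degree_X_pow]
      norm_cast
    exact natDegree_eq_of_degree_eq_some hd
  -- the injection into roots × low-degree polynomials
  set S : Set k[X] := {t : k[X] | t.degree ≤ (g + 1 : ℕ) ∧ v ∣ p + r * t + t ^ 2} with hS
  have hroot : ∀ t ∈ S, φ t ∈ Q.roots.toFinset := by
    intro t ht
    obtain ⟨ht1, ht2⟩ := ht
    have h0 : φ (p + r * t + t ^ 2) = 0 := (hφ _).mpr ht2
    rw [map_add, map_add, map_mul, map_pow] at h0
    have heval : Q.eval (φ t) = 0 := by
      simp only [hQ, eval_add, eval_mul, eval_pow, eval_X, eval_C]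
      linear_combination h0
    exact Multiset.mem_toFinset.mpr ((mem_roots hQm.ne_zero).mpr heval)
  have hdivmem : ∀ t ∈ S, t /ₘ u ∈ degreeLT k N := by
    intro t ht
    obtain ⟨ht1, _⟩ := ht
    rw [mem_degreeLT]
    by_cases h0 : t /ₘ u = 0
    · rw [h0, degree_zero]
      exact WithBot.bot_lt_coe N
    · rw [degree_eq_natDegree h0]
      have hle : t.natDegree ≤ g + 1 := natDegree_le_iff_degree_le.mpr ht1
      have hge : m ≤ t.natDegree := by
        have := mt (divByMonic_eq_zero_iff hum).mpr h0
        rw [not_lt] at this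
        have := natDegree_le_natDegree this
        omega
      rw [natDegree_divByMonic t hum, hund]
      exact_mod_cast (by omega : t.natDegree - m < N)
  let f : S → {x : F // x ∈ Q.roots.toFinset} × (degreeLT k N) :=
    fun t => (⟨φ t.1, hroot t.1 t.2⟩, ⟨t.1 /ₘ u, hdivmem t.1 t.2⟩)
  have hf : Function.Injective f := by
    rintro ⟨t1, ht1⟩ ⟨t2, ht2⟩ h
    simp only [f, Prod.mk.injEq, Subtype.mk.injEq] at h
    obtain ⟨h1, h2⟩ := h
    have hdvd : v ∣ t1 - t2 := by
      rw [← hφ]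
      rw [map_sub, sub_eq_zero]
      exact h1
    have hudvd : u ∣ t1 - t2 := (hassoc.dvd_iff_dvd_left).mp hdvd
    have hmod : t1 %ₘ u = t2 %ₘ u := by
      have := (modByMonic_eq_zero_iff_dvd hum).mpr hudvd
      rw [sub_modByMonic, sub_eq_zero] at this
      exact this
    have e1 := modByMonic_add_div t1 u
    have e2 := modByMonic_add_div t2 u
    apply Subtype.ext
    calc t1 = t1 %ₘ u + u * (t1 /ₘ u) := e1.symm
      _ = t2 %ₘ u + u * (t2 /ₘ u) := by rw [hmod, h2]
      _ = t2 := e2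
  -- counting
  haveI : Finite (degreeLT k N) :=
    (degreeLTEquiv k N).toEquiv.finite_iff.mpr inferInstance
  rw [← Nat.card_coe_set_eq]
  calc Nat.card S ≤ Nat.card ({x : F // x ∈ Q.roots.toFinset} × (degreeLT k N)) :=
        Nat.card_le_card_of_injective f hf
    _ = Nat.card {x : F // x ∈ Q.roots.toFinset} * Nat.card (degreeLT k N) := Nat.card_prod _ _
    _ ≤ 2 * q ^ N := by
        apply Nat.mul_le_mul
        · rw [Nat.card_eq_fintype_card, Fintype.card_coe]
          calc Q.roots.toFinset.card ≤ Multiset.card Q.roots := Q.roots.toFinset_card_le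
            _ ≤ Q.natDegree := Q.card_roots'
            _ = 2 := hQdeg
        · rw [Nat.card_congr (degreeLTEquiv k N).toEquiv, Nat.card_eq_fintype_card,
            Fintype.card_fun, hcard, Fintype.card_fin]
end

section
/- Let q be a power of 2 and k the finite field with q elements, let g >= 2 be an integer, let p, r in k[x], and let v in k[x] be irreducible of degree m with 2*m <= g + 2 and v not dividing r. Then the number of polynomials t in k[x] of degree at most g+1 such that v^2 divides p + r*t + t^2 is at most 2*q^(g+2-2m). -/
open Polynomial

theorem stmt_3 (k : Type*) [Field k] [Fintype k] (q n : ℕ) (hn : 1 ≤ n)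
    (hq : q = 2 ^ n) (hcard : Fintype.card k = q)
    (g : ℕ) (hg : 2 ≤ g)
    (p r v : k[X]) (hv : Irreducible v)
    (m : ℕ) (hm : v.natDegree = m) (hm2 : 2 * m ≤ g + 2)
    (hvr : ¬ v ∣ r) :
    Set.ncard {t : k[X] | t.degree ≤ (g + 1 : ℕ) ∧ v ^ 2 ∣ p + r * t + t ^ 2}
      ≤ 2 * q ^ (g + 2 - 2 * m) := by
  classical
  set N := g + 2 - 2 * m with hN
  set S := {t : k[X] | t.degree ≤ (g + 1 : ℕ) ∧ v ^ 2 ∣ p + r * t + t ^ 2} with hSdef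
  rcases Set.eq_empty_or_nonempty S with hE | ⟨t0, ht0⟩
  · simp [hE]
  -- characteristic 2
  have h2k : (2 : k) = 0 := by
    have hrc := ringChar.charP k
    have hprime : (ringChar k).Prime := CharP.char_is_prime k (ringChar k)
    have hdvd : ringChar k ∣ Fintype.card k :=
      (CharP.cast_eq_zero_iff k (ringChar k) (Fintype.card k)).mp
        (FiniteField.cast_card_eq_zero k)
    rw [hcard, hq] at hdvd
    have h2 : ringChar k = 2 :=
      (Nat.prime_dvd_prime_iff_eq hprime Nat.prime_two).mp
        (hprime.dvd_of_dvd_pow hdvd)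
    have := CharP.cast_eq_zero k (ringChar k)
    rw [h2] at this
    exact_mod_cast this
  have h2 : (2 : k[X]) = 0 := by
    have h' : ((2 : ℕ) : k[X]) = 0 := by
      rw [← map_natCast (Polynomial.C : k →+* k[X]) 2]
      simp [h2k]
    simpa using h'
  have hvne : v ≠ 0 := hv.ne_zero
  have hv2 : v ^ 2 ≠ 0 := pow_ne_zero _ hvne
  have hvp : Prime v := hv.prime
  -- factorization
  have hfac : ∀ t ∈ S, v ^ 2 ∣ (t - t0) * ((t - t0) + r) := by
    intro t ht
    have hd : v ^ 2 ∣ (p + r * t + t ^ 2) - (p + r * t0 + t0 ^ 2) :=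
      dvd_sub ht.2 ht0.2
    have eq1 : (p + r * t + t ^ 2) - (p + r * t0 + t0 ^ 2)
        = (t - t0) * ((t - t0) + r) + 2 * (t0 * (t - t0)) := by ring
    rw [eq1, h2, zero_mul, add_zero] at hd
    exact hd
  -- dichotomy
  have dich : ∀ w : k[X], v ^ 2 ∣ w * (w + r) → v ^ 2 ∣ w ∨ v ^ 2 ∣ w + r := by
    intro w hw
    by_cases h1 : v ∣ w + r
    · right
      have hnw : ¬ v ∣ w := by
        intro hw'
        exact hvr (by simpa using dvd_sub h1 hw')
      exact hvp.pow_dvd_of_dvd_mul_left 2 hnw hw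
    · left
      exact hvp.pow_dvd_of_dvd_mul_right 2 h1 hw
  -- small-degree quotient vanishing
  have key0 : ∀ s : k[X], (v ^ 2 * s).degree ≤ ((g + 1 : ℕ) : WithBot ℕ) →
      (∀ i : Fin N, s.coeff i = 0) → s = 0 := by
    intro s hdeg hc
    by_contra hs
    have hnd : (v ^ 2 * s).natDegree = 2 * m + s.natDegree := by
      rw [natDegree_mul hv2 hs, natDegree_pow, hm]
    have hle : (v ^ 2 * s).natDegree ≤ g + 1 :=
      natDegree_le_iff_degree_le.mpr hdeg
    have hlt : s.natDegree < N := by omega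
    have := hc ⟨s.natDegree, hlt⟩
    exact hs (leadingCoeff_eq_zero.mp this)
  -- injection
  let F : k[X] → Bool × (Fin N → k) := fun t =>
    if v ^ 2 ∣ t - t0 then (false, fun i => ((t - t0) / v ^ 2).coeff i)
    else (true, fun i => ((t - t0 + r) / v ^ 2).coeff i)
  have hinj : Set.InjOn F S := by
    intro t1 h1 t2 h2' hF
    by_cases c1 : v ^ 2 ∣ t1 - t0 <;> by_cases c2 : v ^ 2 ∣ t2 - t0 <;>
      simp only [F, c1, c2, if_pos, if_neg, not_false_iff, Prod.mk.injEq] at hF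
    · -- both divisible
      have e1 : v ^ 2 * ((t1 - t0) / v ^ 2) = t1 - t0 :=
        EuclideanDomain.mul_div_cancel' hv2 c1
      have e2 : v ^ 2 * ((t2 - t0) / v ^ 2) = t2 - t0 :=
        EuclideanDomain.mul_div_cancel' hv2 c2
      have hzero : (t1 - t0) / v ^ 2 - (t2 - t0) / v ^ 2 = 0 := by
        apply key0
        · rw [mul_sub, e1, e2]
          have : (t1 - t0) - (t2 - t0) = t1 - t2 := by ring
          rw [this]
          exact le_trans (degree_sub_le _ _) (max_le h1.1 h2'.1)
        · intro i
          rw [coeff_sub, congrFun hF.2 i, sub_self]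
      have : t1 - t0 = t2 - t0 := by
        rw [← e1, ← e2, sub_eq_zero.mp hzero]
      exact sub_left_injective this
    · exact absurd hF.1 (by simp)
    · exact absurd hF.1 (by simp)
    · -- both in the other class
      have d1 : v ^ 2 ∣ t1 - t0 + r := (dich _ (hfac t1 h1)).resolve_left c1
      have d2 : v ^ 2 ∣ t2 - t0 + r := (dich _ (hfac t2 h2')).resolve_left c2
      have e1 : v ^ 2 * ((t1 - t0 + r) / v ^ 2) = t1 - t0 + r :=
        EuclideanDomain.mul_div_cancel' hv2 d1
      have e2 : v ^ 2 * ((t2 - t0 + r) / v ^ 2) = t2 - t0 + r :=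
        EuclideanDomain.mul_div_cancel' hv2 d2
      have hzero : (t1 - t0 + r) / v ^ 2 - (t2 - t0 + r) / v ^ 2 = 0 := by
        apply key0
        · rw [mul_sub, e1, e2]
          have : (t1 - t0 + r) - (t2 - t0 + r) = t1 - t2 := by ring
          rw [this]
          exact le_trans (degree_sub_le _ _) (max_le h1.1 h2'.1)
        · intro i
          rw [coeff_sub, congrFun hF.2 i, sub_self]
      have : t1 - t0 + r = t2 - t0 + r := by
        rw [← e1, ← e2, sub_eq_zero.mp hzero]
      have : t1 - t0 = t2 - t0 := add_right_cancel this
      exact sub_left_injective this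
  have hmaps : ∀ t ∈ S, F t ∈ (Set.univ : Set (Bool × (Fin N → k))) :=
    fun _ _ => Set.mem_univ _
  calc S.ncard ≤ (Set.univ : Set (Bool × (Fin N → k))).ncard :=
        Set.ncard_le_ncard_of_injOn F hmaps hinj Set.finite_univ
    _ = 2 * q ^ N := by
        rw [Set.ncard_univ, Nat.card_eq_fintype_card, Fintype.card_prod,
          Fintype.card_bool, Fintype.card_fun, Fintype.card_fin, hcard]
end

section
/- Let q be a power of 2 and k the finite field with q elements, let g >= 2 be an integer, let p, r in k[x], and let v in k[x] be irreducible of degree m with 1 <= m <= g + 2 and v dividing r. Then the number of polynomials t in k[x] of degree at most g+1 such that v^2 divides p + r*t + t^2 is at most q^(g+2-m). -/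
open Polynomial

theorem stmt_4 (k : Type*) [Field k] [Fintype k] (q n : ℕ) (hn : 1 ≤ n)
    (hq : q = 2 ^ n) (hcard : Fintype.card k = q)
    (g : ℕ) (hg : 2 ≤ g)
    (p r v : k[X]) (hv : Irreducible v)
    (m : ℕ) (hm : v.natDegree = m) (hm1 : 1 ≤ m) (hm2 : m ≤ g + 2)
    (hvr : v ∣ r) :
    Set.ncard {t : k[X] | t.degree ≤ (g + 1 : ℕ) ∧ v ^ 2 ∣ p + r * t + t ^ 2}
      ≤ q ^ (g + 2 - m) := by
  -- characteristic 2
  have hchar2 : ringChar k = 2 := by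
    have hdvd : ringChar k ∣ q := by
      rw [← hcard]
      exact ringChar.dvd (FiniteField.cast_card_eq_zero k)
    have hprime : (ringChar k).Prime := CharP.char_is_prime k (ringChar k)
    rw [hq] at hdvd
    exact (Nat.prime_dvd_prime_iff_eq hprime Nat.prime_two).mp
      (hprime.dvd_of_dvd_pow hdvd)
  haveI : CharP k 2 := hchar2 ▸ ringChar.charP k
  have h2 : (2 : k[X]) = 0 := by
    have : ((2 : ℕ) : k) = 0 := CharP.cast_eq_zero k 2
    have : ((2 : ℕ) : k[X]) = 0 := by
      rw [← Polynomial.C_eq_natCast, this, map_zero]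
    exact_mod_cast this
  set S := {t : k[X] | t.degree ≤ (g + 1 : ℕ) ∧ v ^ 2 ∣ p + r * t + t ^ 2} with hSdef
  rcases Set.eq_empty_or_nonempty S with hS | ⟨t₀, ht₀⟩
  · simp [← hSdef, hS]
  have hv0 : v ≠ 0 := hv.ne_zero
  set N := g + 2 - m with hN
  set T := {w : k[X] | w.degree < (N : ℕ)} with hTdef
  -- key divisibility
  have key : ∀ t ∈ S, v ∣ t + t₀ := by
    intro t ht
    have hd : v ^ 2 ∣ (p + r * t + t ^ 2) - (p + r * t₀ + t₀ ^ 2) :=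
      dvd_sub ht.2 ht₀.2
    have heq : (p + r * t + t ^ 2) - (p + r * t₀ + t₀ ^ 2)
        = (t + t₀) * (r + (t + t₀)) := by
      linear_combination (-(r * t₀ + t₀ ^ 2 + t * t₀)) * h2
    rw [heq] at hd
    have h1 : v ∣ (t + t₀) * (r + (t + t₀)) :=
      (dvd_pow_self v two_ne_zero).trans hd
    have h2' : v ∣ (t + t₀) * r := hvr.mul_left _
    have h3 : v ∣ (t + t₀) * (t + t₀) := by
      have h := dvd_sub h1 h2'
      rwa [show (t + t₀) * (r + (t + t₀)) - (t + t₀) * r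
          = (t + t₀) * (t + t₀) from by ring] at h
    rcases hv.prime.dvd_mul.mp h3 with h | h <;> exact h
  -- the injection
  have hmaps : ∀ t ∈ S, (t + t₀) / v ∈ T := by
    intro t ht
    have hdvd := key t ht
    have hmul : v * ((t + t₀) / v) = t + t₀ :=
      EuclideanDomain.mul_div_cancel' hv0 hdvd
    set w := (t + t₀) / v with hw
    by_cases hw0 : w = 0
    · simp only [hTdef, Set.mem_setOf_eq, hw0, degree_zero]
      exact WithBot.bot_lt_coe _
    · have hne : t + t₀ ≠ 0 := by rw [← hmul]; exact mul_ne_zero hv0 hw0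
      have hdeg : (t + t₀).degree ≤ ((g + 1 : ℕ) : WithBot ℕ) :=
        le_trans (degree_add_le t t₀) (max_le ht.1 ht₀.1)
      have hnd : (t + t₀).natDegree ≤ g + 1 := natDegree_le_iff_degree_le.mpr hdeg
      have hsum : m + w.natDegree = (t + t₀).natDegree := by
        rw [← hmul, natDegree_mul hv0 hw0, hm]
      show w.degree < ((N : ℕ) : WithBot ℕ)
      rw [← natDegree_lt_iff_degree_lt hw0]
      omega
  have hinj : Set.InjOn (fun t => (t + t₀) / v) S := by
    intro a ha b hb hab
    have h1 : v * ((a + t₀) / v) = a + t₀ :=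
      EuclideanDomain.mul_div_cancel' hv0 (key a ha)
    have h2 : v * ((b + t₀) / v) = b + t₀ :=
      EuclideanDomain.mul_div_cancel' hv0 (key b hb)
    simp only at hab
    rw [hab] at h1
    have := h1.symm.trans h2
    exact add_right_cancel this
  have hTeq : T = (Polynomial.degreeLT k N : Set k[X]) := by
    ext w; simp [hTdef, Polynomial.mem_degreeLT]
  have e := Polynomial.degreeLTEquiv k N
  haveI : Finite (Polynomial.degreeLT k N) := Finite.of_equiv _ e.toEquiv.symm
  have hTfin : T.Finite := by rw [hTeq]; exact Set.toFinite _
  have hTcard : T.ncard = q ^ N := by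
    rw [hTeq]
    rw [← Nat.card_coe_set_eq]
    have : Nat.card (Polynomial.degreeLT k N) = q ^ N := by
      rw [Nat.card_congr e.toEquiv]
      simp [Nat.card_eq_fintype_card, hcard]
    exact this
  calc S.ncard ≤ T.ncard := Set.ncard_le_ncard_of_injOn _ hmaps hinj hTfin
    _ = q ^ N := hTcard
end

section
/- Let k be a finite field with q elements and let S be a set of two-dimensional linear subspaces of k^3 with cardinality strictly less than q^2. Then there exist two-dimensional linear subspaces W1, W2, W3 of k^3, none belonging to S, whose intersection W1 ∩ W2 ∩ W3 is the zero subspace. -/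
open Module

private lemma dual_eq_of_ker_eq {k : Type*} [Field k] {V : Type*} [AddCommGroup V]
    [Module k V] {f g : V →ₗ[k] k} {v : V} (hker : LinearMap.ker f = LinearMap.ker g)
    (hf : f v = 1) (hg : g v = 1) : f = g := by
  ext x
  have hx : x - f x • v ∈ LinearMap.ker f := by
    simp [LinearMap.mem_ker, map_sub, map_smul, hf, mul_one]
  rw [hker] at hx
  have := hx
  simp only [LinearMap.mem_ker, map_sub, map_smul, smul_eq_mul, hg, mul_one,
    sub_eq_zero] at this
  exact this.symm

private lemma key_lemma (k : Type*) [Field k] [Fintype k] (q : ℕ)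
    (hq : Fintype.card k = q) (S : Set (Submodule k (Fin 3 → k)))
    (hScard : S.ncard < q ^ 2) (v : Fin 3 → k) (hv : v ≠ 0) :
    ∃ W : Submodule k (Fin 3 → k), Module.finrank k W = 2 ∧ W ∉ S ∧ v ∉ W := by
  classical
  -- pick a coordinate where v is nonzero
  obtain ⟨i, hi⟩ : ∃ i, v i ≠ 0 := by
    by_contra h; push_neg at h; exact hv (funext h)
  set f₀ : (Fin 3 → k) →ₗ[k] k := (v i)⁻¹ • LinearMap.proj i with hf₀def
  have hf₀ : f₀ v = 1 := by
    simp [hf₀def, LinearMap.proj_apply, inv_mul_cancel₀ hi]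
  set ev : ((Fin 3 → k) →ₗ[k] k) →ₗ[k] k := LinearMap.applyₗ v with hev
  have hevap : ∀ f : (Fin 3 → k) →ₗ[k] k, ev f = f v := fun f => rfl
  set K := LinearMap.ker ev with hK
  -- finrank of the dual is 3
  have hdual : Module.finrank k ((Fin 3 → k) →ₗ[k] k) = 3 := by
    rw [Module.finrank_linearMap]; simp
  -- ev is surjective
  have hsurj : LinearMap.range ev = ⊤ := by
    rw [LinearMap.range_eq_top]
    intro c
    exact ⟨c • f₀, by simp [hevap, hf₀]⟩
  have hKrank : Module.finrank k K = 2 := by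
    have h1 := LinearMap.finrank_range_add_finrank_ker ev
    rw [hsurj, finrank_top, hdual] at h1
    simp only [Module.finrank_self] at h1
    rw [hK]
    omega
  haveI : Finite ((Fin 3 → k) →ₗ[k] k) :=
    Finite.of_injective (fun f => (f : (Fin 3 → k) → k)) DFunLike.coe_injective
  haveI : Fintype K := Fintype.ofFinite K
  have hKcard : Nat.card K = q ^ 2 := by
    rw [Nat.card_eq_fintype_card, card_eq_pow_finrank (K := k), hKrank, hq]
  -- properties of kernels of f₀ + g for g ∈ K
  have hval : ∀ g : K, (f₀ + (g : (Fin 3 → k) →ₗ[k] k)) v = 1 := by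
    intro g
    have := g.2
    rw [LinearMap.mem_ker, hevap] at this
    simp [hf₀, this]
  have hrank2 : ∀ g : K, Module.finrank k (LinearMap.ker (f₀ + (g : (Fin 3 → k) →ₗ[k] k))) = 2 := by
    intro g
    set f := f₀ + (g : (Fin 3 → k) →ₗ[k] k)
    have hr : LinearMap.range f = ⊤ := by
      rw [LinearMap.range_eq_top]
      intro c
      refine ⟨c • v, ?_⟩
      have := hval g
      simp only [map_smul, smul_eq_mul, this, mul_one, f]
    have h1 := LinearMap.finrank_range_add_finrank_ker f
    rw [hr, finrank_top] at h1
    simp only [Module.finrank_self] at h1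
    have h3 : Module.finrank k (Fin 3 → k) = 3 := by simp
    omega
  by_contra hcon
  push_neg at hcon
  -- then g ↦ ker (f₀ + g) maps K injectively into S
  have hmem : ∀ g : K, LinearMap.ker (f₀ + (g : (Fin 3 → k) →ₗ[k] k)) ∈ S := by
    intro g
    by_contra hns
    have hvnot : v ∉ LinearMap.ker (f₀ + (g : (Fin 3 → k) →ₗ[k] k)) := by
      rw [LinearMap.mem_ker, hval g]
      exact one_ne_zero
    exact hvnot (hcon _ (hrank2 g) hns)
  have hSfin : Finite S := by
    have : Finite (Submodule k (Fin 3 → k)) :=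
      Finite.of_injective _ (SetLike.coe_injective (A := Submodule k (Fin 3 → k)))
    exact Subtype.finite
  have hinj : Function.Injective
      (fun g : K => (⟨LinearMap.ker (f₀ + (g : (Fin 3 → k) →ₗ[k] k)), hmem g⟩ : S)) := by
    intro g g' h
    simp only [Subtype.mk.injEq] at h
    have := dual_eq_of_ker_eq h (hval g) (hval g')
    have : (g : (Fin 3 → k) →ₗ[k] k) = g' := by
      have h2 := congrArg (fun f => f - f₀) this
      simpa using h2
    exact Subtype.ext this
  have hle := Nat.card_le_card_of_injective _ hinj
  rw [hKcard, Nat.card_coe_set_eq] at hle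
  omega

theorem stmt_7 (k : Type*) [Field k] [Fintype k] (q : ℕ) (hq : Fintype.card k = q)
    (S : Set (Submodule k (Fin 3 → k)))
    (hS2 : ∀ W ∈ S, Module.finrank k W = 2)
    (hScard : S.ncard < q ^ 2) :
    ∃ W1 W2 W3 : Submodule k (Fin 3 → k),
      Module.finrank k W1 = 2 ∧ Module.finrank k W2 = 2 ∧ Module.finrank k W3 = 2 ∧
      W1 ∉ S ∧ W2 ∉ S ∧ W3 ∉ S ∧ W1 ⊓ W2 ⊓ W3 = ⊥ := by
  classical
  have hv0 : (Pi.single 0 1 : Fin 3 → k) ≠ 0 := by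
    intro h
    have := congrFun h 0
    simp at this
  obtain ⟨W1, hW1r, hW1S, -⟩ := key_lemma k q hq S hScard _ hv0
  -- pick nonzero v1 ∈ W1
  have hW1ne : W1 ≠ ⊥ := by
    intro h; rw [h] at hW1r; simp [finrank_bot] at hW1r
  obtain ⟨v1, hv1W, hv1⟩ := Submodule.exists_mem_ne_zero_of_ne_bot hW1ne
  obtain ⟨W2, hW2r, hW2S, hv1W2⟩ := key_lemma k q hq S hScard v1 hv1
  -- W1 ≠ W2 so their intersection is 1-dimensional
  have hne : W1 ≠ W2 := fun h => hv1W2 (h ▸ hv1W)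
  have hinf1 : Module.finrank k (W1 ⊓ W2 : Submodule k (Fin 3 → k)) = 1 := by
    have hsum := Submodule.finrank_sup_add_finrank_inf_eq W1 W2
    rw [hW1r, hW2r] at hsum
    have hlt : W1 < W1 ⊔ W2 := by
      rcases lt_or_eq_of_le (le_sup_left : W1 ≤ W1 ⊔ W2) with h | h
      · exact h
      · exfalso
        have : W2 ≤ W1 := h ▸ le_sup_right
        have h2 : W2 = W1 := Submodule.eq_of_le_of_finrank_le this (by omega)
        exact hne h2.symm
    have h3 : Module.finrank k (W1 ⊔ W2 : Submodule k (Fin 3 → k)) ≤ 3 := by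
      have := Submodule.finrank_le (W1 ⊔ W2)
      simpa using this
    have h4 : 2 < Module.finrank k (W1 ⊔ W2 : Submodule k (Fin 3 → k)) := by
      rw [← hW1r]
      exact Submodule.finrank_lt_finrank_of_lt hlt
    omega
  have hinfne : (W1 ⊓ W2 : Submodule k (Fin 3 → k)) ≠ ⊥ := by
    intro h; rw [h] at hinf1; simp [finrank_bot] at hinf1
  obtain ⟨v2, hv2W, hv2⟩ := Submodule.exists_mem_ne_zero_of_ne_bot hinfne
  obtain ⟨W3, hW3r, hW3S, hv2W3⟩ := key_lemma k q hq S hScard v2 hv2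
  refine ⟨W1, W2, W3, hW1r, hW2r, hW3r, hW1S, hW2S, hW3S, ?_⟩
  -- W1 ⊓ W2 = span v2
  have hspan : (W1 ⊓ W2 : Submodule k (Fin 3 → k)) = Submodule.span k {v2} := by
    refine (Submodule.eq_of_le_of_finrank_le ((Submodule.span_singleton_le_iff_mem _ _).2 hv2W)
      ?_).symm
    rw [hinf1, finrank_span_singleton hv2]
  rw [hspan]
  rw [Submodule.eq_bot_iff]
  rintro x ⟨hxs, hxW3⟩
  obtain ⟨c, rfl⟩ := Submodule.mem_span_singleton.1 hxs
  by_contra hx0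
  have hc : c ≠ 0 := fun h => hx0 (by simp [h])
  exact hv2W3 (by simpa [smul_smul, inv_mul_cancel₀ hc] using W3.smul_mem c⁻¹ hxW3)
end

section
/- Let F2(X,Y,Z) = (X+Y)^4 + X^2*Y^2 + X*Y*Z*(X+Y+Z) + Z^2*(X+Y+Z)^2 in F_2[X,Y,Z]. For every invertible 3-by-3 matrix A over F_2, the polynomial obtained from F2 by the linear substitution (X,Y,Z) -> A*(X,Y,Z) is equal to F2. In other words, F2 is invariant under the full group GL_3(F_2). -/
open MvPolynomial

/-- The plane quartic `F2` over `𝔽₂`, in variables `X 0, X 1, X 2`. -/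
noncomputable def F2poly : MvPolynomial (Fin 3) (ZMod 2) :=
  (X 0 + X 1) ^ 4 + (X 0) ^ 2 * (X 1) ^ 2
    + X 0 * X 1 * X 2 * (X 0 + X 1 + X 2)
    + (X 2) ^ 2 * (X 0 + X 1 + X 2) ^ 2

private abbrev Pq := MvPolynomial (Fin 3) (ZMod 2)

private lemma Pnum (n : ℕ) [n.AtLeastTwo] : (OfNat.ofNat n : Pq) = ((n % 2 : ℕ) : Pq) := by
  rw [← Nat.cast_ofNat (R := Pq) (n := n), CharP.cast_eq_mod Pq 2]; rfl

private def Qpred (M : Matrix (Fin 3) (Fin 3) (ZMod 2)) : Prop :=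
  (aeval fun i => ∑ j, C (M i j) * X j : Pq →ₐ[ZMod 2] Pq) F2poly = F2poly

private lemma zmod2_cases : ∀ x : ZMod 2, x = 0 ∨ x = 1 := by decide

private lemma Qpred_one : ∀ M : Matrix (Fin 3) (Fin 3) (ZMod 2), M = 1 → Qpred M := by
  rintro M rfl
  unfold Qpred
  have h : (fun i => ∑ j, C ((1 : Matrix (Fin 3) (Fin 3) (ZMod 2)) i j) * X j)
      = (X : Fin 3 → Pq) := by
    funext i
    fin_cases i <;> simp [Fin.sum_univ_three, Matrix.one_apply]
  rw [h]
  simp [aeval_X_left]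

set_option maxHeartbeats 1000000 in
theorem stmt_12 (A : Matrix (Fin 3) (Fin 3) (ZMod 2)) (hA : IsUnit A.det) :
    (aeval fun i => ∑ j, C (A i j) * X j : MvPolynomial (Fin 3) (ZMod 2) →ₐ[ZMod 2]
      MvPolynomial (Fin 3) (ZMod 2)) F2poly = F2poly := by
  show Qpred A
  apply Matrix.diagonal_transvection_induction Qpred A
  · intro D hD
    apply Qpred_one
    have h1 : ∀ i, D i = 1 := by
      intro i
      rcases zmod2_cases (D i) with h | h
      · exfalso
        rw [Matrix.det_diagonal] at hD
        rw [← hD] at hA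
        rw [← Finset.prod_erase_mul _ _ (Finset.mem_univ i), h, mul_zero] at hA
        exact hA.ne_zero rfl
      · exact h
    ext i j
    by_cases h : i = j <;> simp [Matrix.one_apply, h, h1]
  · rintro ⟨i, j, hij, c⟩
    rw [Matrix.TransvectionStruct.toMatrix_mk]
    rcases zmod2_cases c with rfl | rfl
    · exact Qpred_one _ (by simp)
    · unfold Qpred
      fin_cases i <;> fin_cases j <;> first
        | exact absurd rfl hij
        | (simp (config := { decide := true }) only [F2poly, map_add, map_mul, map_pow, aeval_X,
             Fin.sum_univ_three, Matrix.transvection, Matrix.add_apply, Matrix.one_apply,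
             Matrix.single, Matrix.of_apply, if_true, if_false, map_one, map_zero,
             zero_mul, one_mul, add_zero, zero_add]
           ring_nf
           simp only [Pnum]
           norm_num <;> ring_nf)
  · intro M N hM hN
    unfold Qpred at hM hN ⊢
    have h : (fun i => ∑ j, C ((M * N) i j) * X j)
        = fun i => (aeval fun i => ∑ j, C (N i j) * X j : Pq →ₐ[ZMod 2] Pq)
            (∑ j, C (M i j) * X j) := by
      funext i
      simp [Fin.sum_univ_three, Matrix.mul_apply, C_add, C_mul]
      ring
    rw [h, ← comp_aeval, AlgHom.comp_apply, hM, hN]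
end
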